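/- Let c, c₃, c₄ ∈ ℝ with c/ (c₃ t + c₄) > 0 on an interval I. Then the curve x(t) = c₁ (constant), y(t) = √(c/(c₃t + c₄)), z(t) = c₃ (constant), together with control u(t) = 0 and costate p(t) = c₃ t + c₄, satisfies on I the system: p(t)(y(t)² + u(t)) = c, p(t) y(t) ẋ(t) = 0, ṗ(t) = z(t), u(t) = ½ p(t) ẋ(t), and ż(t) = ½ (y(t)² + u(t)) ẋ(t). -/

import Mathlib

/-- The explicit extremal x = c₁, y = √(c/(c₃t+c₄)), z = c₃, u = 0,
p = c₃t + c₄ of the Martinet optimal control problem satisfies the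
extremality system on I. -/
theorem stmt_11 (c c₁ c₃ c₄ : ℝ) (I : Set ℝ)
    (hpos : ∀ t ∈ I, 0 < c / (c₃ * t + c₄)) :
    let x : ℝ → ℝ := fun _ => c₁
    let y : ℝ → ℝ := fun t => Real.sqrt (c / (c₃ * t + c₄))
    let z : ℝ → ℝ := fun _ => c₃
    let u : ℝ → ℝ := fun _ => 0
    let p : ℝ → ℝ := fun t => c₃ * t + c₄
    ∀ t ∈ I,
      p t * (y t ^ 2 + u t) = c
        ∧ p t * y t * deriv x t = 0
        ∧ deriv p t = z t
        ∧ u t = (1 / 2) * p t * deriv x t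
        ∧ deriv z t = (1 / 2) * (y t ^ 2 + u t) * deriv x t := by
  intro x y z u p t ht
  have h := hpos t ht
  have hden : c₃ * t + c₄ ≠ 0 := by
    intro h0
    rw [h0, div_zero] at h
    exact lt_irrefl 0 h
  have hsq : y t ^ 2 = c / (c₃ * t + c₄) := Real.sq_sqrt h.le
  have hdx : deriv x t = 0 := by simp [x]
  have hdz : deriv z t = 0 := by simp [z]
  have hdp : deriv p t = c₃ := by
    have hd : HasDerivAt p c₃ t := by
      simpa [p] using ((hasDerivAt_id t).const_mul c₃).add_const c₄
    exact hd.deriv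
  refine ⟨?_, ?_, ?_, ?_, ?_⟩
  · simp only [u, p, add_zero, hsq]
    field_simp
  · rw [hdx]; ring
  · rw [hdp]
  · simp [u, hdx]
  · rw [hdz, hdx]; ring
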